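/- Let γ > 1 and let P ∈ C¹[0,∞) satisfy P(0) = 0, P(Z) = Z on [0, Z̲] for some Z̲ > 0, P'(Z) > 0 for Z > 0, and lim inf_{Z→∞} P(Z)/Z^γ > 0. Let e(ρ,θ) = (θ^{γ/(γ-1)}/((γ-1)ρ)) P(ρθ^{-1/(γ-1)}). Then there is a constant c > 0 such that ρ^γ + ρθ ≤ c · ρ e(ρ,θ) for all ρ, θ > 0. -/

import Mathlib

open Real Set Filter

/-- Coercivity estimate `ρ^γ + ρθ ≲ ρ e(ρ,θ)` for the internal energy of the
constructed equation of state. -/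
theorem stmt_8 (γ : ℝ) (hγ : 1 < γ) (Z₀ : ℝ) (hZ₀ : 0 < Z₀)
    (P : ℝ → ℝ) (hPC : ContDiffOn ℝ 1 P (Set.Ici 0))
    (hP0 : P 0 = 0)
    (hlin : ∀ Z ∈ Set.Icc (0 : ℝ) Z₀, P Z = Z)
    (hP' : ∀ Z > 0, 0 < deriv P Z)
    (hgrowth : 0 < Filter.liminf (fun Z => P Z / Z ^ γ) Filter.atTop)
    (e : ℝ → ℝ → ℝ)
    (he : ∀ ρ θ : ℝ, 0 < ρ → 0 < θ → e ρ θ =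
      θ ^ (γ / (γ - 1)) / ((γ - 1) * ρ) * P (ρ * θ ^ (-(1 / (γ - 1))))) :
    ∃ c : ℝ, 0 < c ∧ ∀ ρ θ : ℝ, 0 < ρ → 0 < θ →
      ρ ^ γ + ρ * θ ≤ c * (ρ * e ρ θ) := by
  have hg1 : (0:ℝ) < γ - 1 := by linarith
  -- P is strictly monotone on [0, ∞)
  have hmono : StrictMonoOn P (Ici 0) := by
    apply strictMonoOn_of_deriv_pos (convex_Ici 0) hPC.continuousOn
    intro x hx
    rw [interior_Ici] at hx
    exact hP' x hx
  have hPpos : ∀ Z : ℝ, 0 < Z → 0 < P Z := by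
    intro Z hZ
    have h := hmono (self_mem_Ici) (le_of_lt hZ : Z ∈ Ici (0:ℝ)) hZ
    rwa [hP0] at h
  -- use the liminf to get growth at infinity
  set L := Filter.liminf (fun Z => P Z / Z ^ γ) Filter.atTop with hLdef
  have hbdd : IsBoundedUnder (· ≥ ·) atTop (fun Z => P Z / Z ^ γ) := by
    refine isBoundedUnder_of_eventually_ge (a := (0:ℝ)) ?_
    filter_upwards [eventually_gt_atTop (0:ℝ)] with Z hZ
    exact div_nonneg (hPpos Z hZ).le (Real.rpow_pos_of_pos hZ γ).le
  have hev : ∀ᶠ Z in atTop, L / 2 < P Z / Z ^ γ :=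
    eventually_lt_of_lt_liminf (by linarith) hbdd
  obtain ⟨M₀, hM₀⟩ := eventually_atTop.1 hev
  set M : ℝ := max M₀ (max Z₀ 1) with hMdef
  have hM1 : (1:ℝ) ≤ M := le_max_of_le_right (le_max_right _ _)
  have hMZ₀ : Z₀ ≤ M := le_max_of_le_right (le_max_left _ _)
  have hMpos : (0:ℝ) < M := lt_of_lt_of_le one_pos hM1
  -- three constants
  set c₁ : ℝ := Z₀ ^ (γ - 1) + 1 with hc₁def
  set c₂ : ℝ := (M ^ γ + M) / Z₀ with hc₂def
  set c₃ : ℝ := 4 / L with hc₃def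
  have hc₁pos : 0 < c₁ := by positivity
  have hc₂pos : 0 < c₂ := by
    apply div_pos _ hZ₀
    have := Real.rpow_pos_of_pos hMpos γ
    linarith
  have hc₃pos : 0 < c₃ := by positivity
  set c' : ℝ := max (max c₁ c₂) c₃ with hc'def
  have hc'pos : 0 < c' := lt_of_lt_of_le hc₃pos (le_max_right _ _)
  -- key one-dimensional estimate
  have hkey : ∀ Z : ℝ, 0 < Z → Z ^ γ + Z ≤ c' * P Z := by
    intro Z hZ
    have hPZ := hPpos Z hZ
    rcases le_or_gt Z Z₀ with h1 | h1
    · -- small Z : P Z = Z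
      have hPeq : P Z = Z := hlin Z ⟨hZ.le, h1⟩
      have hZγ : Z ^ γ ≤ Z₀ ^ (γ - 1) * Z := by
        have h2 : Z ^ γ = Z ^ (γ - 1) * Z := by
          have h' : γ - 1 + 1 = γ := by ring
          nth_rewrite 1 [← h']
          rw [Real.rpow_add hZ, Real.rpow_one]
        rw [h2]
        have h3 : Z ^ (γ - 1) ≤ Z₀ ^ (γ - 1) :=
          Real.rpow_le_rpow hZ.le h1 hg1.le
        exact mul_le_mul_of_nonneg_right h3 hZ.le
      have hstep : Z ^ γ + Z ≤ c₁ * P Z := by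
        rw [hPeq, hc₁def]; nlinarith
      have : c₁ * P Z ≤ c' * P Z :=
        mul_le_mul_of_nonneg_right (le_trans (le_max_left _ _) (le_max_left _ _)) hPZ.le
      linarith
    · rcases le_or_gt Z M with h2 | h2
      · -- middle range
        have hPge : Z₀ ≤ P Z := by
          have := hmono (le_of_lt hZ₀ : Z₀ ∈ Ici (0:ℝ)) (le_of_lt hZ : Z ∈ Ici (0:ℝ)) h1
          have hPZ₀ : P Z₀ = Z₀ := hlin Z₀ ⟨hZ₀.le, le_refl _⟩
          linarith [hPZ₀ ▸ this]
        have hZγ : Z ^ γ ≤ M ^ γ := Real.rpow_le_rpow hZ.le h2 (by linarith)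
        have hstep : Z ^ γ + Z ≤ c₂ * P Z := by
          have hbase : Z ^ γ + Z ≤ M ^ γ + M := by linarith
          have : c₂ * Z₀ = M ^ γ + M := div_mul_cancel₀ _ (ne_of_gt hZ₀)
          nlinarith
        have : c₂ * P Z ≤ c' * P Z :=
          mul_le_mul_of_nonneg_right (le_trans (le_max_right _ _) (le_max_left _ _)) hPZ.le
        linarith
      · -- large range
        have hZ1 : (1:ℝ) ≤ Z := le_trans hM1 h2.le
        have hZγpos : (0:ℝ) < Z ^ γ := Real.rpow_pos_of_pos hZ γ
        have hLZ : L / 2 < P Z / Z ^ γ := hM₀ Z (le_trans (le_max_left _ _) h2.le)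
        have hPlb : L / 2 * Z ^ γ < P Z := by
          rw [lt_div_iff₀ hZγpos] at hLZ; linarith
        have hZle : Z ≤ Z ^ γ := by
          calc Z = Z ^ (1:ℝ) := (Real.rpow_one Z).symm
            _ ≤ Z ^ γ := Real.rpow_le_rpow_of_exponent_le hZ1 hγ.le
        have hstep : Z ^ γ + Z ≤ c₃ * P Z := by
          have h4 : Z ^ γ + Z ≤ 2 * Z ^ γ := by linarith
          have h5 : 2 * Z ^ γ ≤ c₃ * P Z := by
            rw [hc₃def]
            rw [div_mul_eq_mul_div, le_div_iff₀ hgrowth]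
            nlinarith
          linarith
        have : c₃ * P Z ≤ c' * P Z :=
          mul_le_mul_of_nonneg_right (le_max_right _ _) hPZ.le
        linarith
  -- conclude
  refine ⟨c' * (γ - 1), by positivity, ?_⟩
  intro ρ θ hρ hθ
  set Z : ℝ := ρ * θ ^ (-(1 / (γ - 1))) with hZdef
  have hZpos : 0 < Z := mul_pos hρ (Real.rpow_pos_of_pos hθ _)
  have hθA : (0:ℝ) < θ ^ (γ / (γ - 1)) := Real.rpow_pos_of_pos hθ _
  have e1 : θ ^ (γ / (γ - 1)) * Z ^ γ = ρ ^ γ := by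
    have hb : Z ^ γ = ρ ^ γ * θ ^ (-(1 / (γ - 1)) * γ) := by
      rw [hZdef, Real.mul_rpow hρ.le (Real.rpow_nonneg hθ.le _),
        ← Real.rpow_mul hθ.le]
    rw [hb, mul_left_comm, ← Real.rpow_add hθ]
    have h0 : γ / (γ - 1) + -(1 / (γ - 1)) * γ = 0 := by field_simp; ring
    rw [h0, Real.rpow_zero, mul_one]
  have e2 : θ ^ (γ / (γ - 1)) * Z = ρ * θ := by
    have hb : θ ^ (γ / (γ - 1)) * Z = ρ * (θ ^ (γ / (γ - 1)) * θ ^ (-(1 / (γ - 1)))) := by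
      rw [hZdef]; ring
    rw [hb, ← Real.rpow_add hθ]
    have h1 : γ / (γ - 1) + -(1 / (γ - 1)) = 1 := by field_simp; ring
    rw [h1, Real.rpow_one]
  calc ρ ^ γ + ρ * θ = θ ^ (γ / (γ - 1)) * (Z ^ γ + Z) := by
        rw [mul_add, e1, e2]
    _ ≤ θ ^ (γ / (γ - 1)) * (c' * P Z) :=
        mul_le_mul_of_nonneg_left (hkey Z hZpos) hθA.le
    _ = c' * (γ - 1) * (ρ * e ρ θ) := by
        rw [he ρ θ hρ hθ, ← hZdef]
        field_simp
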